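/- Let (α, β) ∈ ℝ^N × ℝ^N and let ω be a weight function. The pair (α, β) satisfies condition (EDC)₂^{ω} (for every ε > 0 there is C_ε > 0 with |τ + ⟨ξ, α + iβ⟩| ≥ C_ε exp(−ε ω(|(τ,ξ)|)) for all (τ,ξ) ∈ ℤ^{N+1} with τ + ⟨ξ, α+iβ⟩ ≠ 0) if and only if for every ε > 0 there exists C_ε > 0 such that |1 − e^{−2πi⟨ξ, α+iβ⟩}| ≥ C_ε e^{−ε ω(|ξ|)} for all ξ ∈ ℤ^N with ⟨ξ, α+iβ⟩ ∉ ℤ. -/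

import Mathlib

open Real Complex

-- |exp u - 1| ≤ 100 |u| for |u| ≤ 4
lemma aux_exp_lip {u : ℂ} (hu : ‖u‖ ≤ 4) :
    ‖Complex.exp u - 1‖ ≤ 100 * ‖u‖ := by
  have hfac : ∀ v : ℂ, Complex.exp v - 1 = (Complex.exp (v/2) + 1) * (Complex.exp (v/2) - 1) := by
    intro v
    have h : Complex.exp (v/2) * Complex.exp (v/2) = Complex.exp v := by
      rw [← Complex.exp_add, add_halves]
    linear_combination -h
  have habs : ∀ v : ℂ, ‖v‖ ≤ 4 → ‖Complex.exp (v/2) + 1‖ ≤ Real.exp 2 + 1 := by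
    intro v hv
    have h2 : ‖v/2‖ = ‖v‖ / 2 := by
      rw [norm_div]; norm_num
    calc ‖Complex.exp (v/2) + 1‖ ≤ ‖Complex.exp (v/2)‖ + 1 := by
          simpa using norm_add_le (Complex.exp (v/2)) 1
      _ ≤ Real.exp 2 + 1 := by
          rw [Complex.norm_exp]
          have h1 : (v/2).re ≤ ‖v/2‖ := Complex.re_le_norm _
          gcongr
          rw [h2] at h1; linarith
  have h4 : ‖u/4‖ = ‖u‖ / 4 := by rw [norm_div]; norm_num
  have h4' : ‖u/4‖ ≤ 1 := by rw [h4]; linarith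
  have hsmall : ‖Complex.exp (u/4) - 1‖ ≤ 2 * ‖u/4‖ :=
    Complex.norm_exp_sub_one_le h4'
  have hu2 : ‖u/2‖ ≤ 4 := by
    have : ‖u/2‖ = ‖u‖ / 2 := by rw [norm_div]; norm_num
    rw [this]; linarith [norm_nonneg u]
  have step2 : ‖Complex.exp (u/2) - 1‖
      ≤ (Real.exp 2 + 1) * (2 * ‖u/4‖) := by
    have heq : u/2/2 = u/4 := by ring
    have h1 := habs (u/2) hu2
    rw [heq] at h1
    rw [hfac (u/2), norm_mul, heq]
    exact mul_le_mul h1 hsmall (norm_nonneg _) (by positivity)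
  have step1 : ‖Complex.exp u - 1‖
      ≤ (Real.exp 2 + 1) * ((Real.exp 2 + 1) * (2 * ‖u/4‖)) := by
    rw [hfac u, norm_mul]
    exact mul_le_mul (habs u hu) step2 (norm_nonneg _) (by positivity)
  have he : Real.exp 2 ≤ 8 := by
    have h9 := Real.exp_one_lt_d9
    calc Real.exp 2 = Real.exp 1 * Real.exp 1 := by rw [← Real.exp_add]; norm_num
      _ ≤ 8 := by nlinarith [Real.exp_pos 1]
  rw [h4] at step1
  have h0 : 0 ≤ ‖u‖ := norm_nonneg u
  have hb : (Real.exp 2 + 1) * ((Real.exp 2 + 1) * (2 * (‖u‖ / 4)))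
      ≤ 9 * (9 * (2 * (‖u‖ / 4))) := by
    gcongr <;> linarith
  linarith

-- Jordan-type: |1 - e^{iθ}| ≥ (2/π)|θ| for |θ| ≤ π
lemma aux_jordan {θ : ℝ} (hθ : |θ| ≤ π) :
    2 / π * |θ| ≤ ‖1 - Complex.exp (θ * I)‖ := by
  have hexp : Complex.exp (θ * I) = (Real.cos θ : ℂ) + (Real.sin θ : ℂ) * I := by
    rw [Complex.exp_mul_I]
    simp [Complex.ofReal_cos, Complex.ofReal_sin]
  have hval : (1 : ℂ) - Complex.exp (θ * I)
      = ((1 - Real.cos θ : ℝ) : ℂ) + ((-Real.sin θ : ℝ) : ℂ) * I := by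
    rw [hexp]; push_cast; ring
  have hsq : (‖1 - Complex.exp (θ * I)‖)^2 = 2 - 2 * Real.cos θ := by
    rw [hval, Complex.sq_norm, Complex.normSq_add_mul_I]
    nlinarith [Real.sin_sq_add_cos_sq θ]
  have hcos : Real.cos θ ≤ 1 - 2 / π ^ 2 * θ ^ 2 := Real.cos_le_one_sub_mul_cos_sq hθ
  have hnn : 0 ≤ ‖1 - Complex.exp (θ * I)‖ := norm_nonneg _
  have hpi : (0:ℝ) < π := Real.pi_pos
  have key : (2 / π * |θ|)^2 ≤ (‖1 - Complex.exp (θ * I)‖)^2 := by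
    rw [hsq]
    have habs2 : |θ|^2 = θ^2 := sq_abs θ
    have hexpand : (2 / π * |θ|)^2 = 4 / π^2 * θ^2 := by
      rw [mul_pow, habs2, div_pow]; norm_num
    have h2 : 4 / π^2 * θ^2 = 2*(2 / π^2 * θ^2) := by ring
    rw [hexpand, h2]; linarith
  exact le_of_pow_le_pow_left₀ (by norm_num) hnn key

-- |1 - e^{2πb}| ≥ |b|/2 for |b| ≤ 1
lemma aux_real_low {b : ℝ} (hb : |b| ≤ 1) : |b| / 2 ≤ |1 - Real.exp (2*π*b)| := by
  have hpi : (3:ℝ) < π := by linarith [Real.pi_gt_three]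
  rcases le_or_gt 0 b with h | h
  · have h1 : 2*π*b + 1 ≤ Real.exp (2*π*b) := Real.add_one_le_exp _
    rw [_root_.abs_of_nonneg h, _root_.abs_of_nonpos (by nlinarith)]
    nlinarith
  · have hb' : |b| = -b := abs_of_neg h
    set t := -(2*π*b) with ht
    have htpos : 0 < t := by nlinarith
    have htle : t ≤ 2*π := by rw [hb'] at hb; nlinarith
    have h1 : t + 1 ≤ Real.exp t := Real.add_one_le_exp _
    have h2 : Real.exp (2*π*b) = 1 / Real.exp t := by
      rw [one_div, ← Real.exp_neg, ht, neg_neg]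
    have h3 : Real.exp (2*π*b) ≤ 1 / (1+t) := by
      rw [h2]
      apply div_le_div_of_nonneg_left (by norm_num) (by positivity) (by linarith)
    have h4 : t / (1+t) ≤ 1 - Real.exp (2*π*b) := by
      have heq : 1 - 1/(1+t) = t/(1+t) := by field_simp; ring
      linarith [heq.le, heq.ge]
    have hle1 : 1/(1+t) ≤ 1 := by
      rw [div_le_one (by linarith)]; linarith
    rw [_root_.abs_of_nonneg (by linarith : (0:ℝ) ≤ 1 - Real.exp (2*π*b))]
    have h5 : t / (1+2*π) ≤ t / (1+t) :=
      div_le_div_of_nonneg_left (le_of_lt htpos) (by positivity) (by linarith)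
    have h6 : t = 2*π*|b| := by rw [hb']; ring
    have h7 : |b|/2 ≤ 2*π*|b| / (1+2*π) := by
      rw [div_le_div_iff₀ (by norm_num) (by positivity)]
      nlinarith [abs_nonneg b]
    rw [h6] at h5 h4
    linarith

-- |1 - e^{2πb}| ≤ 2π e^{2π} |b| for |b| ≤ 1
lemma aux_real_up {b : ℝ} (hb : |b| ≤ 1) :
    |1 - Real.exp (2*π*b)| ≤ 2*π*Real.exp (2*π) * |b| := by
  have hpi : (3:ℝ) < π := by linarith [Real.pi_gt_three]
  rcases le_or_gt 0 b with h | h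
  · have h1 : -(2*π*b) + 1 ≤ Real.exp (-(2*π*b)) := Real.add_one_le_exp _
    have h2 := mul_le_mul_of_nonneg_left h1 (Real.exp_pos (2*π*b)).le
    rw [← Real.exp_add] at h2
    simp only [add_neg_cancel, Real.exp_zero] at h2
    have h3 : Real.exp (2*π*b) ≤ Real.exp (2*π) := by
      apply Real.exp_le_exp.2; rw [_root_.abs_of_nonneg h] at hb; nlinarith
    have hbnn : (0:ℝ) ≤ 2*π*b := by positivity
    have h4 := mul_le_mul_of_nonneg_left h3 hbnn
    rw [_root_.abs_of_nonpos (by nlinarith [Real.add_one_le_exp (2*π*b)]),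
      _root_.abs_of_nonneg h]
    nlinarith [Real.exp_pos (2*π*b)]
  · have h1 : 2*π*b + 1 ≤ Real.exp (2*π*b) := Real.add_one_le_exp _
    rw [_root_.abs_of_nonneg (by nlinarith [Real.exp_pos (2*π*b), Real.exp_le_exp.2 (show 2*π*b ≤ 0 by nlinarith), Real.exp_zero] : (0:ℝ) ≤ 1 - Real.exp (2*π*b)),
      abs_of_neg h]
    have hone : (1:ℝ) ≤ Real.exp (2*π) := Real.one_le_exp (by positivity)
    have hcnn : (0:ℝ) ≤ 2*π*(-b) := by nlinarith
    have h5 := mul_le_mul_of_nonneg_left hone hcnn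
    nlinarith

-- |1 - e^{2πb}| ≥ 1/2 for |b| ≥ 1
lemma aux_real_big {b : ℝ} (hb : 1 ≤ |b|) : 1/2 ≤ |1 - Real.exp (2*π*b)| := by
  have hpi : (3:ℝ) < π := by linarith [Real.pi_gt_three]
  rcases le_or_gt 0 b with h | h
  · have hb1 : 1 ≤ b := by rwa [_root_.abs_of_nonneg h] at hb
    have h1 : 2*π*b + 1 ≤ Real.exp (2*π*b) := Real.add_one_le_exp _
    rw [_root_.abs_of_nonpos (by nlinarith)]
    nlinarith
  · have hb1 : b ≤ -1 := by rw [abs_of_neg h] at hb; linarith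
    have h2 : Real.exp (2*π*b) ≤ Real.exp (-1) := by
      apply Real.exp_le_exp.2; nlinarith
    have h3 : Real.exp (-1) ≤ 1/2 := by
      rw [Real.exp_neg]
      have := Real.add_one_le_exp (1:ℝ)
      rw [inv_le_comm₀ (Real.exp_pos 1) (by norm_num)]
      linarith
    rw [_root_.abs_of_nonneg (by nlinarith [Real.exp_pos (2*π*b)])]
    linarith


lemma aux_double (ω : ℝ → ℝ) (hmono : Monotone ω) (hnonneg : ∀ t : ℝ, 0 ≤ ω t)
    (hsub : ∀ s t : ℝ, 0 ≤ s → 0 ≤ t → ω (s + t) ≤ ω s + ω t)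
    (K : ℝ) (hK : ∀ t ≥ (0:ℝ), ω (2 * t) ≤ K * (ω t + 1))
    (M : ℝ) (hM : 0 ≤ M) :
    ∃ A : ℝ, 1 ≤ A ∧ ∀ t ≥ (0:ℝ), ω ((M+1)*t + 1) ≤ A * (ω t + 1) := by
  set K' := max K 1 with hK'def
  have hK'1 : (1:ℝ) ≤ K' := le_max_right _ _
  have hK'' : ∀ t ≥ (0:ℝ), ω (2*t) ≤ K' * (ω t + 1) := by
    intro t ht
    calc ω (2*t) ≤ K * (ω t + 1) := hK t ht
      _ ≤ K' * (ω t + 1) :=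
        mul_le_mul_of_nonneg_right (le_max_left _ _) (by linarith [hnonneg t])
  obtain ⟨m, hm⟩ := pow_unbounded_of_one_lt (M+1) (by norm_num : (1:ℝ) < 2)
  have key : ∀ k : ℕ, ∀ t ≥ (0:ℝ), ω (2^k * t) ≤ K'^k * ω t + k * K'^k := by
    intro k
    induction k with
    | zero => intro t ht; simp
    | succ n ih =>
      intro t ht
      have h1 : (2:ℝ)^(n+1) * t = 2 * (2^n * t) := by ring
      have h2 : (0:ℝ) ≤ 2^n * t := by positivity
      have hKn1 : (1:ℝ) ≤ K'^n := one_le_pow₀ hK'1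
      have hKs1 : (1:ℝ) ≤ K'^(n+1) := one_le_pow₀ hK'1
      have hKle : K' ≤ K'^(n+1) := le_self_pow₀ (by linarith) (Nat.succ_ne_zero n)
      have h3 := ih t ht
      calc ω (2^(n+1) * t) = ω (2 * (2^n * t)) := by rw [h1]
        _ ≤ K' * (ω (2^n * t) + 1) := hK'' _ h2
        _ ≤ K' * (K'^n * ω t + n * K'^n + 1) := by
            apply mul_le_mul_of_nonneg_left _ (by linarith)
            linarith
        _ = K'^(n+1) * ω t + n * K'^(n+1) + K' := by rw [pow_succ]; ring
        _ ≤ K'^(n+1) * ω t + ((n+1 : ℕ) : ℝ) * K'^(n+1) := by push_cast; nlinarith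
  refine ⟨K'^m + m * K'^m + ω 1, ?_, ?_⟩
  · have : (1:ℝ) ≤ K'^m := one_le_pow₀ hK'1
    have := hnonneg 1
    have hmn : (0:ℝ) ≤ (m:ℝ) := Nat.cast_nonneg m
    nlinarith
  · intro t ht
    have hKm1 : (1:ℝ) ≤ K'^m := one_le_pow₀ hK'1
    have hmn : (0:ℝ) ≤ (m:ℝ) := Nat.cast_nonneg m
    have h1 : (M+1)*t + 1 ≤ 2^m * t + 1 := by nlinarith
    have h2 : ω ((M+1)*t+1) ≤ ω (2^m * t + 1) := hmono h1
    have h3 : ω (2^m * t + 1) ≤ ω (2^m * t) + ω 1 := hsub _ _ (by positivity) (by norm_num)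
    have h4 := key m t ht
    have h5 := hnonneg t
    have h6 := hnonneg 1
    nlinarith [mul_nonneg (mul_nonneg hmn (by linarith : (0:ℝ) ≤ K'^m)) h5,
      mul_nonneg h6 h5, mul_nonneg (by linarith : (0:ℝ) ≤ K'^m) h5]

set_option maxHeartbeats 2000000 in
theorem stmt13 (N : ℕ) (α β : Fin N → ℝ) (ω : ℝ → ℝ)
    (hmono : Monotone ω) (hcont : Continuous ω) (hnonneg : ∀ t : ℝ, 0 ≤ ω t)
    (hsub : ∀ s t : ℝ, 0 ≤ s → 0 ≤ t → ω (s + t) ≤ ω s + ω t)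
    (hK : ∃ K : ℝ, ∀ t ≥ (0:ℝ), ω (2 * t) ≤ K * (ω t + 1))
    (hO : ∃ C > 0, ∀ t ≥ (1:ℝ), ω t ≤ C * t)
    (hlog : ∀ c > 0, ∃ T : ℝ, ∀ t ≥ T, Real.log t ≤ c * ω t) :
    (∀ ε > 0, ∃ C > 0, ∀ τ : ℤ, ∀ ξ : Fin N → ℤ,
        ((τ : ℂ) + ∑ j : Fin N, (ξ j : ℂ) * ((α j : ℂ) + Complex.I * (β j : ℂ))) ≠ 0 →
        C * Real.exp (-ε * ω (|(τ : ℝ)| + ∑ j : Fin N, |(ξ j : ℝ)|)) ≤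
          ‖(τ : ℂ) + ∑ j : Fin N, (ξ j : ℂ) * ((α j : ℂ) + Complex.I * (β j : ℂ))‖)
    ↔
    (∀ ε > 0, ∃ C > 0, ∀ ξ : Fin N → ℤ,
        (¬ ∃ k : ℤ, (∑ j : Fin N, (ξ j : ℂ) * ((α j : ℂ) + Complex.I * (β j : ℂ))) = (k : ℂ)) →
        C * Real.exp (-ε * ω (∑ j : Fin N, |(ξ j : ℝ)|)) ≤
          ‖1 - Complex.exp (-(2 * (π : ℂ)) * Complex.I *
            (∑ j : Fin N, (ξ j : ℂ) * ((α j : ℂ) + Complex.I * (β j : ℂ))))‖) := by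
  have hpi : (3:ℝ) < π := by linarith [Real.pi_gt_three]
  obtain ⟨K, hKK⟩ := hK
  -- real and imaginary parts of the lattice point
  have hre : ∀ ξ : Fin N → ℤ,
      (∑ j : Fin N, (ξ j : ℂ) * ((α j : ℂ) + Complex.I * (β j : ℂ))).re
        = ∑ j : Fin N, (ξ j : ℝ) * α j := by
    intro ξ
    rw [Complex.re_sum]
    refine Finset.sum_congr rfl fun j _ => ?_
    simp [Complex.mul_re, Complex.add_re, Complex.add_im, Complex.mul_im,
      Complex.I_re, Complex.I_im]
  have him : ∀ ξ : Fin N → ℤ,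
      (∑ j : Fin N, (ξ j : ℂ) * ((α j : ℂ) + Complex.I * (β j : ℂ))).im
        = ∑ j : Fin N, (ξ j : ℝ) * β j := by
    intro ξ
    rw [Complex.im_sum]
    refine Finset.sum_congr rfl fun j _ => ?_
    simp [Complex.mul_re, Complex.add_re, Complex.add_im, Complex.mul_im,
      Complex.I_re, Complex.I_im]
  set M : ℝ := ∑ j : Fin N, (|α j| + |β j|) with hMdef
  have hM0 : 0 ≤ M := Finset.sum_nonneg fun j _ => by positivity
  have hbound : ∀ (γ : Fin N → ℝ), (∀ j, |γ j| ≤ M) → ∀ ξ : Fin N → ℤ,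
      |∑ j : Fin N, (ξ j : ℝ) * γ j| ≤ M * ∑ j : Fin N, |(ξ j : ℝ)| := by
    intro γ hγ ξ
    calc |∑ j : Fin N, (ξ j : ℝ) * γ j| ≤ ∑ j : Fin N, |(ξ j : ℝ) * γ j| :=
          Finset.abs_sum_le_sum_abs _ _
      _ ≤ ∑ j : Fin N, |(ξ j : ℝ)| * M := by
          refine Finset.sum_le_sum fun j _ => ?_
          rw [abs_mul]
          exact mul_le_mul_of_nonneg_left (hγ j) (abs_nonneg _)
      _ = M * ∑ j : Fin N, |(ξ j : ℝ)| := by rw [← Finset.sum_mul]; ring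
  have hαM : ∀ j, |α j| ≤ M := by
    intro j
    have h := Finset.single_le_sum (f := fun j => |α j| + |β j|)
      (fun i _ => by positivity) (Finset.mem_univ j)
    replace h : |α j| + |β j| ≤ M := h
    have := abs_nonneg (β j); linarith
  have hβM : ∀ j, |β j| ≤ M := by
    intro j
    have h := Finset.single_le_sum (f := fun j => |α j| + |β j|)
      (fun i _ => by positivity) (Finset.mem_univ j)
    replace h : |α j| + |β j| ≤ M := h
    have := abs_nonneg (α j); linarith
  -- |exp(-2πI u)| and lower bound by |1-e^{2π Im u}|
  have habs_exp : ∀ u : ℂ,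
      ‖Complex.exp (-(2 * (π:ℂ)) * Complex.I * u)‖ = Real.exp (2*π*u.im) := by
    intro u
    rw [Complex.norm_exp]
    congr 1
    simp [Complex.mul_re, Complex.mul_im, Complex.neg_re, Complex.neg_im,
      Complex.I_re, Complex.I_im, Complex.ofReal_re, Complex.ofReal_im]
  have habs_low : ∀ u : ℂ, |1 - Real.exp (2*π*u.im)| ≤
      ‖1 - Complex.exp (-(2 * (π:ℂ)) * Complex.I * u)‖ := by
    intro u
    calc |1 - Real.exp (2*π*u.im)|
        = |‖1‖ - ‖Complex.exp (-(2 * (π:ℂ)) * Complex.I * u)‖| := by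
          rw [habs_exp u, norm_one]
      _ ≤ ‖1 - Complex.exp (-(2 * (π:ℂ)) * Complex.I * u)‖ :=
          abs_norm_sub_norm_le _ _
  constructor
  · -- forward: EDC ⟹ exponential bound
    intro H ε hε
    obtain ⟨A, hA1, hAd⟩ := aux_double ω hmono hnonneg hsub K hKK M hM0
    have hApos : (0:ℝ) < A := lt_of_lt_of_le one_pos hA1
    set ε₀ := ε / A with hε₀def
    have hε₀pos : 0 < ε₀ := div_pos hε hApos
    have hεA : ε₀ * A = ε := div_mul_cancel₀ ε (ne_of_gt hApos)
    obtain ⟨C₀, hC₀, hEDC⟩ := H ε₀ hε₀pos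
    set Cp : ℝ := 2*π*Real.exp (2*π) with hCpdef
    have hCp1 : (1:ℝ) ≤ Cp := by
      have := Real.one_le_exp (show (0:ℝ) ≤ 2*π by positivity)
      nlinarith
    set κ : ℝ := 1/(2*(Cp+1)) with hκdef
    have hκpos : 0 < κ := by rw [hκdef]; positivity
    have hκ1 : κ ≤ 1 := by rw [hκdef]; rw [div_le_one (by linarith)]; linarith
    refine ⟨min (1/2) (κ * C₀ * Real.exp (-(ε₀*A))),
      lt_min (by norm_num) (by positivity), ?_⟩
    intro ξ hξ
    set S := ∑ j : Fin N, |(ξ j : ℝ)| with hSdef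
    have hS0 : 0 ≤ S := Finset.sum_nonneg fun j _ => abs_nonneg _
    set zc := ∑ j : Fin N, (ξ j : ℂ) * ((α j : ℂ) + Complex.I * (β j : ℂ)) with hzcdef
    have hzre : zc.re = ∑ j : Fin N, (ξ j : ℝ) * α j := hre ξ
    have hzim : zc.im = ∑ j : Fin N, (ξ j : ℝ) * β j := him ξ
    set Av := ∑ j : Fin N, (ξ j : ℝ) * α j with hAvdef
    set Bv := ∑ j : Fin N, (ξ j : ℝ) * β j with hBvdef
    have hAb : |Av| ≤ M * S := hbound α hαM ξ
    have hBb : |Bv| ≤ M * S := hbound β hβM ξ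
    clear_value S
    have hexp1 : Real.exp (-ε * ω S) ≤ 1 := by
      rw [Real.exp_le_one_iff]
      nlinarith [hnonneg S]
    by_cases hB1 : 1 ≤ |Bv|
    · -- imaginary part large
      have h1 := aux_real_big hB1
      have h2 := habs_low zc
      rw [hzim] at h2
      calc min (1/2) (κ * C₀ * Real.exp (-(ε₀*A))) * Real.exp (-ε * ω S)
          ≤ (1/2) * 1 := by
            apply mul_le_mul (min_le_left _ _) hexp1 (Real.exp_pos _).le (by norm_num)
        _ ≤ ‖1 - Complex.exp (-(2 * (π:ℂ)) * Complex.I * zc)‖ := by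
            rw [mul_one]; linarith
    · push_neg at hB1
      set τ : ℤ := -round Av with hτdef
      have ha2 : |(τ:ℝ) + Av| ≤ 1/2 := by
        have h := abs_sub_round Av
        have : ((τ:ℝ)) + Av = Av - round Av := by rw [hτdef]; push_cast; ring
        rw [this]; linarith [abs_sub_round Av]
      set a : ℝ := (τ:ℝ) + Av with hadef
      set w : ℂ := (τ:ℂ) + zc with hwdef
      have hwre : w.re = a := by
        rw [hwdef, Complex.add_re, hzre]; simp [hadef]
      have hwim : w.im = Bv := by
        rw [hwdef, Complex.add_im, hzim]; simp [hBvdef]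
      have hwne : w ≠ 0 := by
        intro h0
        apply hξ
        refine ⟨-τ, ?_⟩
        have hz : zc = -(τ:ℂ) := by
          have := h0
          rw [hwdef] at this
          linear_combination this
        rw [hz]; push_cast; ring
      have hEDCw := hEDC τ ξ (by rw [← hzcdef, ← hwdef]; exact hwne)
      rw [← hzcdef, ← hwdef, ← hSdef] at hEDCw
      clear_value w a τ zc Av Bv
      have hτb : |(τ:ℝ)| ≤ M*S + 1 := by
        have heq : (τ:ℝ) = a - Av := by rw [hadef]; ring
        rw [heq]
        calc |a - Av| ≤ |a| + |Av| := abs_sub _ _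
          _ ≤ 1/2 + M*S := by exact add_le_add ha2 hAb
          _ ≤ M*S + 1 := by linarith
      have hωb : ω (|(τ:ℝ)| + S) ≤ A * (ω S + 1) := by
        have h1 : |(τ:ℝ)| + S ≤ (M+1)*S + 1 := by nlinarith
        calc ω (|(τ:ℝ)| + S) ≤ ω ((M+1)*S+1) := hmono h1
          _ ≤ A * (ω S + 1) := hAd S hS0
      have hexpb : Real.exp (-(ε₀*A)) * Real.exp (-ε * ω S)
          ≤ Real.exp (-ε₀ * ω (|(τ:ℝ)| + S)) := by
        rw [← Real.exp_add]
        apply Real.exp_le_exp.2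
        have h2 := mul_le_mul_of_nonneg_left hωb hε₀pos.le
        have h3 : ε₀ * (A*(ω S + 1)) = ε * ω S + ε₀ * A := by rw [← hεA]; ring
        nlinarith
      -- lower bound on abs w
      have hwlow : κ * (C₀ * (Real.exp (-(ε₀*A)) * Real.exp (-ε * ω S)))
          ≤ κ * ‖w‖ := by
        apply mul_le_mul_of_nonneg_left _ hκpos.le
        calc C₀ * (Real.exp (-(ε₀*A)) * Real.exp (-ε * ω S))
            ≤ C₀ * Real.exp (-ε₀ * ω (|(τ:ℝ)| + S)) :=
              mul_le_mul_of_nonneg_left hexpb hC₀.le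
          _ ≤ ‖w‖ := hEDCw
      -- periodicity : exp(-2πI zc) = exp(-2πI w)
      have hper : Complex.exp (-(2 * (π:ℂ)) * Complex.I * zc)
          = Complex.exp (-(2 * (π:ℂ)) * Complex.I * w) := by
        rw [hwdef, mul_add, Complex.exp_add]
        have h1 : Complex.exp (-(2 * (π:ℂ)) * Complex.I * (τ:ℂ)) = 1 := by
          have h2 := Complex.exp_int_mul_two_pi_mul_I (-τ)
          rw [← h2]; congr 1; push_cast; ring
        rw [h1, one_mul]
      have hdecomp : -(2 * (π:ℂ)) * Complex.I * w
          = ((2*π*Bv : ℝ):ℂ) + (((-(2*π*a)) : ℝ):ℂ) * Complex.I := by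
        have hweq : w = (a:ℂ) + (Bv:ℂ)*Complex.I := by
          rw [← hwre, ← hwim]; exact (Complex.re_add_im w).symm
        rw [hweq]; push_cast
        linear_combination (-(2*(π:ℂ)*(Bv:ℂ))) * Complex.I_sq
      have hsplit : (1:ℂ) - Complex.exp (-(2 * (π:ℂ)) * Complex.I * w)
          = (1 - Complex.exp ((((-(2*π*a)) : ℝ):ℂ) * Complex.I))
            + Complex.exp ((((-(2*π*a)) : ℝ):ℂ) * Complex.I)
              * (1 - ((Real.exp (2*π*Bv) : ℝ):ℂ)) := by
        rw [hdecomp, Complex.exp_add, ← Complex.ofReal_exp]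
        ring
      set f := ‖1 - Complex.exp (-(2 * (π:ℂ)) * Complex.I * zc)‖ with hfdef
      have hf_w : f = ‖1 - Complex.exp (-(2 * (π:ℂ)) * Complex.I * w)‖ := by
        rw [hfdef, hper]
      have hlow1 : |Bv|/2 ≤ f := by
        have h2 := habs_low zc
        rw [hzim] at h2
        have h3 := aux_real_low hB1.le
        rw [hfdef]; linarith
      have hlow2 : 4*|a| - Cp*|Bv| ≤ f := by
        have hθ : |(-(2*π*a))| ≤ π := by
          rw [abs_neg, abs_mul, abs_of_pos (show (0:ℝ) < 2*π by positivity)]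
          nlinarith [ha2]
        have hj := aux_jordan hθ
        have hj4 : 4*|a| ≤ ‖1 - Complex.exp ((((-(2*π*a)):ℝ):ℂ) * Complex.I)‖ := by
          have heq : 2/π * |(-(2*π*a))| = 4*|a| := by
            rw [abs_neg, abs_mul, abs_of_pos (show (0:ℝ) < 2*π by positivity)]
            field_simp; ring
          rw [heq] at hj; exact hj
        have hup := aux_real_up hB1.le
        have htri : ‖1 - Complex.exp ((((-(2*π*a)):ℝ):ℂ) * Complex.I)‖
            ≤ f + ‖Complex.exp ((((-(2*π*a)):ℝ):ℂ) * Complex.I)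
              * (1 - ((Real.exp (2*π*Bv) : ℝ):ℂ))‖ := by
          rw [hf_w]
          calc ‖1 - Complex.exp ((((-(2*π*a)):ℝ):ℂ) * Complex.I)‖
              = ‖(1 - Complex.exp (-(2 * (π:ℂ)) * Complex.I * w))
                - Complex.exp ((((-(2*π*a)):ℝ):ℂ) * Complex.I)
                  * (1 - ((Real.exp (2*π*Bv) : ℝ):ℂ))‖ := by
                congr 1; linear_combination -hsplit
            _ ≤ _ := by
                rw [sub_eq_add_neg]
                refine (norm_add_le _ _).trans ?_
                rw [norm_neg]
        have habs2 : ‖Complex.exp ((((-(2*π*a)):ℝ):ℂ) * Complex.I)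
            * (1 - ((Real.exp (2*π*Bv) : ℝ):ℂ))‖ = |1 - Real.exp (2*π*Bv)| := by
          rw [norm_mul, Complex.norm_exp_ofReal_mul_I, one_mul]
          rw [show ((1:ℂ) - ((Real.exp (2*π*Bv) : ℝ):ℂ)) = (((1 - Real.exp (2*π*Bv) : ℝ)):ℂ) by push_cast; ring]
          exact (Complex.norm_real _).trans (Real.norm_eq_abs _)
        rw [habs2] at htri
        rw [← hCpdef] at hup
        linarith
      have hwabs : ‖w‖ ≤ |a| + |Bv| := by
        calc ‖w‖ ≤ |w.re| + |w.im| := Complex.norm_le_abs_re_add_abs_im w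
          _ = |a| + |Bv| := by rw [hwre, hwim]
      have hcomb : κ * ‖w‖ ≤ f := by
        have hκeq : κ * (2*(Cp+1)) = 1 := by
          rw [hκdef]; field_simp
        rcases le_or_gt (|a|) (Cp*|Bv|) with hc | hc
        · have h1 : |a| + |Bv| ≤ (Cp+1)*|Bv| := by nlinarith
          have h2 : κ * ‖w‖ ≤ κ * ((Cp+1)*|Bv|) := by
            apply mul_le_mul_of_nonneg_left _ hκpos.le
            linarith [hwabs]
          have h3 : κ * ((Cp+1)*|Bv|) = |Bv|/2 := by
            field_simp at hκeq ⊢; nlinarith [hκeq]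
          linarith
        · have hBa : |Bv| ≤ |a| := by nlinarith [abs_nonneg Bv]
          have h1 : |a| + |Bv| ≤ 3*|a| - Cp*|Bv| := by nlinarith [abs_nonneg Bv]
          have h2 : κ * ‖w‖ ≤ |a| + |Bv| := by
            calc κ * ‖w‖ ≤ 1 * ‖w‖ :=
                mul_le_mul_of_nonneg_right hκ1 (norm_nonneg w)
              _ = ‖w‖ := one_mul _
              _ ≤ |a| + |Bv| := hwabs
          nlinarith [abs_nonneg a]
      calc min (1/2) (κ * C₀ * Real.exp (-(ε₀*A))) * Real.exp (-ε * ω S)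
          ≤ (κ * C₀ * Real.exp (-(ε₀*A))) * Real.exp (-ε * ω S) :=
            mul_le_mul_of_nonneg_right (min_le_right _ _) (Real.exp_pos _).le
        _ = κ * (C₀ * (Real.exp (-(ε₀*A)) * Real.exp (-ε * ω S))) := by ring
        _ ≤ κ * ‖w‖ := hwlow
        _ ≤ f := hcomb
  · -- converse
    intro H ε hε
    obtain ⟨C, hC, hRHS⟩ := H ε hε
    refine ⟨min (1/2) (C / (400*π)), lt_min (by norm_num) (by positivity), ?_⟩
    intro τ ξ hne
    set S := ∑ j : Fin N, |(ξ j : ℝ)| with hSdef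
    have hS0 : 0 ≤ S := Finset.sum_nonneg fun j _ => abs_nonneg _
    set zc := ∑ j : Fin N, (ξ j : ℂ) * ((α j : ℂ) + Complex.I * (β j : ℂ)) with hzcdef
    set w : ℂ := (τ:ℂ) + zc with hwdef
    clear_value S
    have hexp1 : Real.exp (-ε * ω (|(τ:ℝ)| + S)) ≤ 1 := by
      rw [Real.exp_le_one_iff]
      nlinarith [hnonneg (|(τ:ℝ)| + S)]
    rcases le_or_gt (1/2) (‖w‖) with hw | hw
    · calc min (1/2) (C / (400*π)) * Real.exp (-ε * ω (|(τ:ℝ)| + S))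
          ≤ (1/2) * 1 := by
            apply mul_le_mul (min_le_left _ _) hexp1 (Real.exp_pos _).le (by norm_num)
        _ ≤ ‖w‖ := by rw [mul_one]; exact hw
    · have hznotint : ¬ ∃ k : ℤ, zc = (k : ℂ) := by
        rintro ⟨k, hk⟩
        have hwk : w = ((τ + k : ℤ) : ℂ) := by rw [hwdef, hk]; push_cast; ring
        have hne' : τ + k ≠ 0 := by
          intro h0
          apply hne
          rw [hwk, h0]; norm_num
        have : (1:ℝ) ≤ ‖w‖ := by
          rw [hwk]
          rw [Complex.norm_intCast]
          exact_mod_cast Int.one_le_abs hne'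
        linarith
      have hR := hRHS ξ (by rw [← hzcdef]; exact hznotint)
      rw [← hzcdef, ← hSdef] at hR
      -- periodicity
      have hper : Complex.exp (-(2 * (π:ℂ)) * Complex.I * zc)
          = Complex.exp (-(2 * (π:ℂ)) * Complex.I * w) := by
        rw [hwdef, mul_add, Complex.exp_add]
        have h1 : Complex.exp (-(2 * (π:ℂ)) * Complex.I * (τ:ℂ)) = 1 := by
          have h2 := Complex.exp_int_mul_two_pi_mul_I (-τ)
          rw [← h2]; congr 1; push_cast; ring
        rw [h1, one_mul]
      have hub : ‖1 - Complex.exp (-(2 * (π:ℂ)) * Complex.I * w)‖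
          ≤ 400*π * ‖w‖ := by
        have huabs : ‖-(2 * (π:ℂ)) * Complex.I * w‖ = 2*π*‖w‖ := by
          rw [norm_mul, norm_mul, Complex.norm_I, mul_one, norm_neg]
          congr 1
          rw [show ((2:ℂ) * (π:ℂ)) = (((2*π : ℝ)):ℂ) by push_cast; ring, Complex.norm_real, Real.norm_eq_abs]
          rw [abs_of_pos (by positivity)]
        have h4 : ‖-(2 * (π:ℂ)) * Complex.I * w‖ ≤ 4 := by
          rw [huabs]
          nlinarith [norm_nonneg w, Real.pi_lt_d2]
        have h5 := aux_exp_lip h4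
        rw [huabs] at h5
        calc ‖1 - Complex.exp (-(2 * (π:ℂ)) * Complex.I * w)‖
            = ‖Complex.exp (-(2 * (π:ℂ)) * Complex.I * w) - 1‖ :=
              norm_sub_rev _ _
          _ ≤ 100 * (2*π*‖w‖) := h5
          _ ≤ 400*π * ‖w‖ := by nlinarith [norm_nonneg w]
      rw [hper] at hR
      have hωS : Real.exp (-ε * ω (|(τ:ℝ)| + S)) ≤ Real.exp (-ε * ω S) := by
        apply Real.exp_le_exp.2
        have := hmono (show S ≤ |(τ:ℝ)| + S by linarith [abs_nonneg ((τ:ℝ))])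
        nlinarith
      calc min (1/2) (C / (400*π)) * Real.exp (-ε * ω (|(τ:ℝ)| + S))
          ≤ (C / (400*π)) * Real.exp (-ε * ω S) := by
            apply mul_le_mul (min_le_right _ _) hωS (Real.exp_pos _).le (by positivity)
        _ ≤ ‖w‖ := by
            rw [div_mul_eq_mul_div, div_le_iff₀ (by positivity)]
            calc C * Real.exp (-ε * ω S)
                ≤ ‖1 - Complex.exp (-(2 * (π:ℂ)) * Complex.I * w)‖ := hR
              _ ≤ 400*π * ‖w‖ := hub
              _ = ‖w‖ * (400*π) := by ring
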